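/- If φ : ℝ → ℝ is twice continuously differentiable, not identically zero, satisfies −(β − ν₀²/3)·φ″(x) − 2ν_KdV·φ(x) + (3/2)·(ω²/3 + 1)·φ(x)² = 0 for every x ∈ ℝ, and φ(x) → 0 as x → ∞, then there exists y ∈ ℝ such that φ(x) = φ_KdV(x + y) for all x ∈ ℝ; conversely, every translate φ_KdV(· + y) is such a solution. In other words, the set of nontrivial decaying solutions of this ordinary differential equation is exactly D_KdV = {φ_KdV(· + y) : y ∈ ℝ}. -/

import Mathlib

open Filter

noncomputable def sech (x : ℝ) : ℝ := 1 / Real.cosh x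

lemma sech_sq (x : ℝ) : sech x ^ 2 = (Real.cosh x)⁻¹ ^ 2 := by
  simp [sech, one_div]

lemma hasDerivAt_sechsq (x : ℝ) :
    HasDerivAt (fun x => sech x ^ 2) (-2 * Real.sinh x / Real.cosh x ^ 3) x := by
  have h1 : HasDerivAt Real.cosh (Real.sinh x) x := Real.hasDerivAt_cosh x
  have h2 : HasDerivAt (fun x => (Real.cosh x)⁻¹) (-(Real.sinh x) / Real.cosh x ^ 2) x := by
    exact h1.inv (Real.cosh_pos x).ne'
  have h3 := h2.pow 2
  have : ∀ y, sech y ^ 2 = ((Real.cosh y)⁻¹) ^ 2 := fun y => by simp [sech, one_div]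
  simp only [funext this]
  refine h3.congr_deriv (Eq.symm ?_)
  have hc := (Real.cosh_pos x).ne'
  field_simp
  norm_num
  field_simp

lemma deriv_sechsq : deriv (fun x => sech x ^ 2) = fun x => -2 * Real.sinh x / Real.cosh x ^ 3 :=
  funext fun x => (hasDerivAt_sechsq x).deriv

lemma hasDerivAt_sechsq' (x : ℝ) :
    HasDerivAt (fun x => -2 * Real.sinh x / Real.cosh x ^ 3)
      (4 * sech x ^ 2 - 6 * (sech x ^ 2) ^ 2) x := by
  have h1 : HasDerivAt (fun x => -2 * Real.sinh x) (-2 * Real.cosh x) x :=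
    (Real.hasDerivAt_sinh x).const_mul _
  have h2 : HasDerivAt (fun x => Real.cosh x ^ 3) (3 * Real.cosh x ^ 2 * Real.sinh x) x := by
    exact ((Real.hasDerivAt_cosh x).pow 3).congr_deriv (by norm_num)
  have hc := (Real.cosh_pos x).ne'
  have h3 := h1.div h2 (by positivity)
  refine h3.congr_deriv (Eq.symm ?_)
  have hs : Real.sinh x ^ 2 = Real.cosh x ^ 2 - 1 := by
    have := Real.cosh_sq_sub_sinh_sq x; nlinarith
  simp only [sech, one_div]
  field_simp
  linear_combination (-6) * hs

lemma deriv2_sechsq (x : ℝ) :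
    deriv (deriv (fun x => sech x ^ 2)) x = 4 * sech x ^ 2 - 6 * (sech x ^ 2) ^ 2 := by
  rw [deriv_sechsq]
  exact (hasDerivAt_sechsq' x).deriv

lemma sechsq_energy (x : ℝ) :
    (-2 * Real.sinh x / Real.cosh x ^ 3) ^ 2
      = 4 * (sech x ^ 2) ^ 2 * (1 - sech x ^ 2) := by
  have hc := (Real.cosh_pos x).ne'
  have hs : Real.sinh x ^ 2 = Real.cosh x ^ 2 - 1 := by
    have := Real.cosh_sq_sub_sinh_sq x; nlinarith
  simp only [sech, one_div]
  field_simp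
  linear_combination 4 * hs

lemma contDiff_sechsq : ContDiff ℝ 2 (fun x => sech x ^ 2) := by
  have : ContDiff ℝ 2 (fun x : ℝ => (Real.cosh x)⁻¹ ^ 2) :=
    ((Real.contDiff_cosh.of_le le_top).inv (fun x => (Real.cosh_pos x).ne')).pow 2
  convert this using 2 with x
  simp [sech, one_div]

lemma tendsto_sechsq : Tendsto (fun x => sech x ^ 2) atTop (nhds 0) := by
  have hcosh : Tendsto Real.cosh atTop atTop := by
    apply tendsto_atTop_mono (fun x => ?_) (Real.tendsto_exp_atTop.atTop_div_const (by norm_num : (0:ℝ) < 2))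
    rw [Real.cosh_eq]
    have := Real.exp_pos (-x)
    linarith
  have h : Tendsto (fun x : ℝ => (Real.cosh x)⁻¹) atTop (nhds 0) :=
    hcosh.inv_tendsto_atTop
  have := (h.pow 2)
  simpa [sech, one_div] using this

/-- clamped nonlinearity -/
noncomputable def cl (M p : ℝ) : ℝ := max (-M) (min p M)

lemma cl_le {M : ℝ} (hM : 0 ≤ M) (p : ℝ) : |cl M p| ≤ M := by
  rw [abs_le]; constructor
  · exact le_max_left _ _
  · exact max_le (by linarith) (min_le_right _ _)

lemma cl_eq {M p : ℝ} (h : |p| ≤ M) : cl M p = p := by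
  rw [abs_le] at h
  rw [cl, min_eq_left h.2, max_eq_right h.1]

lemma cl_lip (M a b : ℝ) : |cl M a - cl M b| ≤ |a - b| := by
  unfold cl
  calc |max (-M) (min a M) - max (-M) (min b M)|
      = |max (min a M) (-M) - max (min b M) (-M)| := by rw [max_comm (-M), max_comm (-M)]
    _ ≤ |min a M - min b M| := abs_max_sub_max_le_abs _ _ _
    _ ≤ max |a - b| |M - M| := abs_min_sub_min_le_max _ _ _ _
    _ ≤ |a - b| := by simp

noncomputable def gM (M p : ℝ) : ℝ := 4 * cl M p - 6 * cl M p ^ 2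

lemma gM_lip {M : ℝ} (hM : 0 ≤ M) (a b : ℝ) : |gM M a - gM M b| ≤ (4 + 12 * M) * |a - b| := by
  have h1 := cl_le hM a
  have h2 := cl_le hM b
  have h3 := cl_lip M a b
  have : gM M a - gM M b = (cl M a - cl M b) * (4 - 6 * (cl M a + cl M b)) := by
    unfold gM; ring
  rw [this, abs_mul]
  have h4 : |4 - 6 * (cl M a + cl M b)| ≤ 4 + 12 * M := by
    rw [abs_le] at *
    constructor <;> nlinarith
  calc |cl M a - cl M b| * |4 - 6 * (cl M a + cl M b)| ≤ |a - b| * (4 + 12 * M) := by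
        apply mul_le_mul h3 h4 (abs_nonneg _) (abs_nonneg _)
    _ = (4 + 12 * M) * |a - b| := mul_comm _ _

noncomputable def VM (M : ℝ) : ℝ × ℝ → ℝ × ℝ := fun p => (p.2, gM M p.1)

lemma VM_lip {M : ℝ} (hM : 0 ≤ M) : LipschitzWith (Real.toNNReal (4 + 12 * M)) (VM M) := by
  rw [lipschitzWith_iff_dist_le_mul]
  intro p q
  rw [Prod.dist_eq, Prod.dist_eq]
  simp only [VM, Real.dist_eq]
  have hK : (Real.toNNReal (4 + 12 * M) : ℝ) = 4 + 12 * M := by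
    rw [Real.coe_toNNReal]; linarith
  rw [hK]
  have h1 := gM_lip hM p.1 q.1
  have h2 : |p.2 - q.2| ≤ (4 + 12 * M) * max |p.1 - q.1| |p.2 - q.2| := by
    nlinarith [le_max_right |p.1 - q.1| |p.2 - q.2|, abs_nonneg (p.1 - q.1), abs_nonneg (p.2 - q.2), le_max_left |p.1 - q.1| |p.2 - q.2|]
  apply max_le h2
  calc |gM M p.1 - gM M q.1| ≤ (4 + 12 * M) * |p.1 - q.1| := h1
    _ ≤ (4 + 12 * M) * max |p.1 - q.1| |p.2 - q.2| := by
        apply mul_le_mul_of_nonneg_left (le_max_left _ _) (by linarith)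

lemma ode_unique {K : NNReal} {v : ℝ × ℝ → ℝ × ℝ} (hv : LipschitzWith K v)
    {f g : ℝ → ℝ × ℝ} (hf : ∀ t, HasDerivAt f (v (f t)) t) (hg : ∀ t, HasDerivAt g (v (g t)) t)
    {t₀ : ℝ} (h : f t₀ = g t₀) (t : ℝ) : f t = g t := by
  have hmem : ∀ s : ℝ, s ∈ Set.Ioo (min t t₀ - 1) (max t t₀ + 1) → True := fun _ _ => trivial
  have ht₀ : t₀ ∈ Set.Ioo (min t t₀ - 1) (max t t₀ + 1) := by
    constructor
    · have := min_le_right t t₀; linarith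
    · have := le_max_right t t₀; linarith
  have ht : t ∈ Set.Ioo (min t t₀ - 1) (max t t₀ + 1) := by
    constructor
    · have := min_le_left t t₀; linarith
    · have := le_max_left t t₀; linarith
  exact ODE_solution_unique_of_mem_Ioo (v := fun _ : ℝ => v)
    (s := fun _ => (Set.univ : Set (ℝ × ℝ))) (fun _ _ => hv.lipschitzOnWith)
    ht₀ (fun s _ => ⟨hf s, trivial⟩) (fun s _ => ⟨hg s, trivial⟩) h ht

section Core

variable {u : ℝ → ℝ}

lemma cd2_deriv (hu : ContDiff ℝ 2 u) : ContDiff ℝ 1 (deriv u) := by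
  have : ContDiff ℝ (1 + 1) u := by norm_num; exact hu
  exact (contDiff_succ_iff_deriv.mp this).2.2

lemma cd2_d1 (hu : ContDiff ℝ 2 u) (x : ℝ) : HasDerivAt u (deriv u x) x :=
  ((hu.differentiable (by norm_num)) x).hasDerivAt

lemma cd2_d2 (hu : ContDiff ℝ 2 u) (x : ℝ) : HasDerivAt (deriv u) (deriv (deriv u) x) x :=
  (((cd2_deriv hu).differentiable (by norm_num)) x).hasDerivAt

lemma cd2_cont_deriv (hu : ContDiff ℝ 2 u) : Continuous (deriv u) :=
  (cd2_deriv hu).continuous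

end Core

section Core2

variable {u : ℝ → ℝ}

lemma energy_hasDeriv (hu : ContDiff ℝ 2 u)
    (hode : ∀ x, deriv (deriv u) x = 4 * u x - 6 * u x ^ 2) (x : ℝ) :
    HasDerivAt (fun x => (deriv u x) ^ 2 - 4 * (u x) ^ 2 + 4 * (u x) ^ 3) 0 x := by
  have h1 : HasDerivAt (fun x => (deriv u x) ^ 2)
      (2 * deriv u x ^ 1 * deriv (deriv u) x) x := (cd2_d2 hu x).pow 2
  have h2 : HasDerivAt (fun x => 4 * (u x) ^ 2)
      (4 * (2 * u x ^ 1 * deriv u x)) x := ((cd2_d1 hu x).pow 2).const_mul 4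
  have h3 : HasDerivAt (fun x => 4 * (u x) ^ 3)
      (4 * (3 * u x ^ 2 * deriv u x)) x := ((cd2_d1 hu x).pow 3).const_mul 4
  have h := (h1.sub h2).add h3
  refine h.congr_deriv (Eq.symm ?_)
  rw [hode x]
  ring

lemma energy_const (hu : ContDiff ℝ 2 u)
    (hode : ∀ x, deriv (deriv u) x = 4 * u x - 6 * u x ^ 2) (x : ℝ) :
    (deriv u x) ^ 2 - 4 * (u x) ^ 2 + 4 * (u x) ^ 3
      = (deriv u 0) ^ 2 - 4 * (u 0) ^ 2 + 4 * (u 0) ^ 3 := by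
  apply is_const_of_deriv_eq_zero (f := fun x => (deriv u x) ^ 2 - 4 * (u x) ^ 2 + 4 * (u x) ^ 3)
  · exact fun y => (energy_hasDeriv hu hode y).differentiableAt
  · exact fun y => (energy_hasDeriv hu hode y).deriv

end Core2

lemma sign_Ici {f : ℝ → ℝ} (hf : Continuous f) {X : ℝ} (hnz : ∀ x, X ≤ x → f x ≠ 0) :
    (∀ x, X ≤ x → 0 < f x) ∨ (∀ x, X ≤ x → f x < 0) := by
  rcases (hnz X le_rfl).lt_or_gt with hX | hX
  · right
    intro x hx
    by_contra h
    push_neg at h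
    have hfx : 0 < f x := lt_of_le_of_ne h (Ne.symm (hnz x hx))
    have h0 : (0 : ℝ) ∈ Set.uIcc (f X) (f x) := by
      rw [Set.mem_uIcc]; left; exact ⟨hX.le, hfx.le⟩
    obtain ⟨c, hc, hfc⟩ := intermediate_value_uIcc (hf.continuousOn) h0
    have : X ≤ c := by
      rcases Set.mem_uIcc.mp hc with ⟨h1, _⟩ | ⟨h1, _⟩
      · exact h1
      · linarith [hx]
    exact hnz c this hfc
  · left
    intro x hx
    by_contra h
    push_neg at h
    have hfx : f x < 0 := lt_of_le_of_ne h (hnz x hx)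
    have h0 : (0 : ℝ) ∈ Set.uIcc (f X) (f x) := by
      rw [Set.mem_uIcc]; right; exact ⟨hfx.le, hX.le⟩
    obtain ⟨c, hc, hfc⟩ := intermediate_value_uIcc (hf.continuousOn) h0
    have : X ≤ c := by
      rcases Set.mem_uIcc.mp hc with ⟨h1, _⟩ | ⟨h1, _⟩
      · exact h1
      · linarith [hx]
    exact hnz c this hfc

lemma sign_univ {f : ℝ → ℝ} (hf : Continuous f) (hnz : ∀ x, f x ≠ 0) :
    (∀ x, 0 < f x) ∨ (∀ x, f x < 0) := by
  rcases sign_Ici hf (X := 0) (fun x _ => hnz x) with h | h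
  · -- positive to the right; show positive everywhere
    left
    intro x
    by_contra hx
    push_neg at hx
    have hfx : f x < 0 := lt_of_le_of_ne hx (hnz x)
    have h0 : (0 : ℝ) ∈ Set.uIcc (f x) (f 0) := by
      rw [Set.mem_uIcc]; left; exact ⟨hfx.le, (h 0 le_rfl).le⟩
    obtain ⟨c, _, hfc⟩ := intermediate_value_uIcc (hf.continuousOn) h0
    exact hnz c hfc
  · right
    intro x
    by_contra hx
    push_neg at hx
    have hfx : 0 < f x := lt_of_le_of_ne hx (Ne.symm (hnz x))
    have h0 : (0 : ℝ) ∈ Set.uIcc (f x) (f 0) := by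
      rw [Set.mem_uIcc]; right; exact ⟨(h 0 le_rfl).le, hfx.le⟩
    obtain ⟨c, _, hfc⟩ := intermediate_value_uIcc (hf.continuousOn) h0
    exact hnz c hfc

section Core3

variable {u : ℝ → ℝ}

lemma no_lin_growth (hu : ContDiff ℝ 2 u) (hlim : Tendsto u atTop (nhds 0))
    {X m : ℝ} (hm : 0 < m) (h : ∀ x, X ≤ x → m ≤ deriv u x) : False := by
  have hgrow := (convex_Ici X).mul_sub_le_image_sub_of_le_deriv
    (hu.continuous.continuousOn) ((hu.differentiable (by norm_num)).differentiableOn)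
    (fun x hx => h x (le_of_lt (by simpa using hx)))
  have hlin : Tendsto (fun y : ℝ => u X + m * (y - X)) atTop atTop := by
    apply tendsto_atTop_add_const_left
    exact (tendsto_id.atTop_add tendsto_const_nhds).const_mul_atTop hm
  have : Tendsto u atTop atTop := by
    apply tendsto_atTop_mono' _ _ hlin
    filter_upwards [eventually_ge_atTop X] with y hy
    have := hgrow X (le_refl X) y hy hy
    linarith
  exact not_tendsto_atTop_of_tendsto_nhds hlim this

lemma no_lin_decay (hu : ContDiff ℝ 2 u) (hlim : Tendsto u atTop (nhds 0))
    {X m : ℝ} (hm : 0 < m) (h : ∀ x, X ≤ x → deriv u x ≤ -m) : False := by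
  have hgrow := (convex_Ici X).image_sub_le_mul_sub_of_deriv_le
    ((hu.differentiable (by norm_num)).differentiableOn.continuousOn)
    ((hu.differentiable (by norm_num)).differentiableOn)
    (fun x hx => h x (le_of_lt (by simpa using hx)))
  have hlin : Tendsto (fun y : ℝ => u X + -m * (y - X)) atTop atBot := by
    apply tendsto_atBot_add_const_left
    apply Tendsto.const_mul_atTop_of_neg (by linarith : -m < 0)
    exact tendsto_id.atTop_add tendsto_const_nhds
  have : Tendsto u atTop atBot := by
    apply tendsto_atBot_mono' _ _ hlin
    filter_upwards [eventually_ge_atTop X] with y hy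
    have := hgrow X (le_refl X) y hy hy
    linarith
  exact not_tendsto_atBot_of_tendsto_nhds hlim this

lemma energy_zero (hu : ContDiff ℝ 2 u)
    (hode : ∀ x, deriv (deriv u) x = 4 * u x - 6 * u x ^ 2)
    (hlim : Tendsto u atTop (nhds 0)) (x : ℝ) :
    (deriv u x) ^ 2 = 4 * (u x) ^ 2 * (1 - u x) := by
  set L := (deriv u 0) ^ 2 - 4 * (u 0) ^ 2 + 4 * (u 0) ^ 3 with hL
  have hconst : ∀ y, (deriv u y) ^ 2 = L + 4 * (u y) ^ 2 - 4 * (u y) ^ 3 := by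
    intro y
    have := energy_const hu hode y
    linarith
  have hLzero : L = 0 := by
    have hpoly : Continuous fun t : ℝ => L + 4 * t ^ 2 - 4 * t ^ 3 :=
      (continuous_const.add (continuous_const.mul (continuous_pow 2))).sub (continuous_const.mul (continuous_pow 3))
    have htends : Tendsto (fun y => (deriv u y) ^ 2) atTop (nhds L) := by
      have h2 := (hpoly.tendsto 0).comp hlim
      simp only [Function.comp_def] at h2
      have h3 : L + 4 * (0:ℝ) ^ 2 - 4 * 0 ^ 3 = L := by ring
      rw [h3] at h2
      exact h2.congr (fun y => (hconst y).symm)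
    have hL0 : 0 ≤ L := ge_of_tendsto' htends (fun y => sq_nonneg _)
    rcases hL0.eq_or_lt with h | hLpos
    · exact h.symm
    exfalso
    have hev : ∀ᶠ y in atTop, L / 2 < (deriv u y) ^ 2 :=
      htends.eventually (eventually_gt_nhds (by linarith))
    obtain ⟨X, hX⟩ := eventually_atTop.mp hev
    have hnz : ∀ y, X ≤ y → deriv u y ≠ 0 := by
      intro y hy h0
      have := hX y hy
      rw [h0] at this
      nlinarith
    have hm : 0 < Real.sqrt (L / 2) := Real.sqrt_pos.mpr (by linarith)
    rcases sign_Ici (cd2_cont_deriv hu) hnz with hpos | hneg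
    · apply no_lin_growth hu hlim hm
      intro y hy
      have h1 := hX y hy
      have h2 := hpos y hy
      nlinarith [Real.sq_sqrt (by linarith : (0:ℝ) ≤ L / 2), Real.sqrt_nonneg (L / 2)]
    · apply no_lin_decay hu hlim hm
      intro y hy
      have h1 := hX y hy
      have h2 := hneg y hy
      nlinarith [Real.sq_sqrt (by linarith : (0:ℝ) ≤ L / 2), Real.sqrt_nonneg (L / 2)]
  have := hconst x
  rw [hLzero] at this
  linarith [this]

end Core3

lemma ode_unique_Ioo {K : NNReal} {v : ℝ × ℝ → ℝ × ℝ} (hv : LipschitzWith K v)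
    {f g : ℝ → ℝ × ℝ} {a b t₀ t : ℝ} (ht₀ : t₀ ∈ Set.Ioo a b) (ht : t ∈ Set.Ioo a b)
    (hf : ∀ s ∈ Set.Ioo a b, HasDerivAt f (v (f s)) s)
    (hg : ∀ s ∈ Set.Ioo a b, HasDerivAt g (v (g s)) s)
    (h : f t₀ = g t₀) : f t = g t :=
  ODE_solution_unique_of_mem_Ioo (v := fun _ : ℝ => v)
    (s := fun _ => (Set.univ : Set (ℝ × ℝ))) (fun _ _ => hv.lipschitzOnWith)
    ht₀ (fun s hs => ⟨hf s hs, trivial⟩) (fun s hs => ⟨hg s hs, trivial⟩) h ht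

section Core4

variable {u : ℝ → ℝ}

lemma never_zero (hu : ContDiff ℝ 2 u)
    (hode : ∀ x, deriv (deriv u) x = 4 * u x - 6 * u x ^ 2)
    (hlim : Tendsto u atTop (nhds 0)) (hne : u ≠ 0) (x₁ : ℝ) : u x₁ ≠ 0 := by
  intro h₁
  apply hne
  have h₁' : deriv u x₁ = 0 := by
    have := energy_zero hu hode hlim x₁
    rw [h₁] at this
    nlinarith
  funext x
  have hsub : Set.Icc (min x x₁ - 1) (max x x₁ + 1) ⊇ Set.Ioo (min x x₁ - 1) (max x x₁ + 1) :=
    Set.Ioo_subset_Icc_self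
  obtain ⟨M, hM⟩ := (isCompact_Icc (a := min x x₁ - 1) (b := max x x₁ + 1)).exists_bound_of_continuousOn
    hu.continuous.continuousOn
  set M' := max M 0 with hM'
  have hM'0 : (0:ℝ) ≤ M' := le_max_right _ _
  have hbound : ∀ t ∈ Set.Ioo (min x x₁ - 1) (max x x₁ + 1), |u t| ≤ M' := by
    intro t ht
    calc |u t| = ‖u t‖ := (Real.norm_eq_abs _).symm
      _ ≤ M := hM t (hsub ht)
      _ ≤ M' := le_max_left _ _
  have hx : x ∈ Set.Ioo (min x x₁ - 1) (max x x₁ + 1) :=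
    ⟨by have := min_le_left x x₁; linarith, by have := le_max_left x x₁; linarith⟩
  have hx₁ : x₁ ∈ Set.Ioo (min x x₁ - 1) (max x x₁ + 1) :=
    ⟨by have := min_le_right x x₁; linarith, by have := le_max_right x x₁; linarith⟩
  have hf : ∀ s ∈ Set.Ioo (min x x₁ - 1) (max x x₁ + 1),
      HasDerivAt (fun t => (u t, deriv u t)) (VM M' (u s, deriv u s)) s := by
    intro s hs
    have hd : HasDerivAt (fun t => (u t, deriv u t)) (deriv u s, deriv (deriv u) s) s :=
      (cd2_d1 hu s).prodMk (cd2_d2 hu s)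
    have : VM M' (u s, deriv u s) = (deriv u s, deriv (deriv u) s) := by
      simp only [VM, gM, cl_eq (hbound s hs), hode s]
    rw [this]
    exact hd
  have hg : ∀ s ∈ Set.Ioo (min x x₁ - 1) (max x x₁ + 1),
      HasDerivAt (fun _ : ℝ => ((0:ℝ), (0:ℝ))) (VM M' ((0:ℝ), (0:ℝ))) s := by
    intro s _
    have : VM M' ((0:ℝ), (0:ℝ)) = ((0:ℝ), (0:ℝ)) := by
      have h0 : |(0:ℝ)| ≤ M' := by simpa using hM'0
      simp [VM, gM, cl_eq h0]
    rw [this]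
    exact hasDerivAt_const _ _
  have heq0 : (fun t => (u t, deriv u t)) x₁ = (fun _ : ℝ => ((0:ℝ), (0:ℝ))) x₁ := by
    simp [h₁, h₁']
  have := ode_unique_Ioo (VM_lip hM'0) hx₁ hx hf hg heq0
  simpa using congrArg Prod.fst this

end Core4

section Core5

variable {u : ℝ → ℝ}

lemma u_pos (hu : ContDiff ℝ 2 u)
    (hode : ∀ x, deriv (deriv u) x = 4 * u x - 6 * u x ^ 2)
    (hlim : Tendsto u atTop (nhds 0)) (hne : u ≠ 0) (x : ℝ) : 0 < u x := by
  have hnz := never_zero hu hode hlim hne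
  have hEn := energy_zero hu hode hlim
  rcases sign_univ hu.continuous hnz with hpos | hneg
  · exact hpos x
  exfalso
  have hw : ∀ y, 0 < -(u y) := fun y => by linarith [hneg y]
  have hdnz : ∀ y, deriv u y ≠ 0 := by
    intro y h0
    have := hEn y
    rw [h0] at this
    nlinarith [hneg y]
  rcases sign_univ (cd2_cont_deriv hu) hdnz with hdpos | hdneg
  · -- deriv u > 0 everywhere : backward blow-up
    set w := fun y => -(u y) with hwdef
    have hsqw : ∀ y, 0 < Real.sqrt (w y) := fun y => Real.sqrt_pos.mpr (hw y)
    have hV : ∀ y, HasDerivAt (fun t => (Real.sqrt (w t))⁻¹)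
        (deriv u y / (2 * w y * Real.sqrt (w y))) y := by
      intro y
      have hw' : HasDerivAt w (-(deriv u y)) y := (cd2_d1 hu y).neg
      have hs : HasDerivAt (fun t => Real.sqrt (w t))
          (1 / (2 * Real.sqrt (w y)) * (-(deriv u y))) y :=
        (Real.hasDerivAt_sqrt (hw y).ne').comp y hw'
      have hinv := hs.inv (hsqw y).ne'
      refine hinv.congr_deriv (Eq.symm ?_)
      have h1 : Real.sqrt (w y) ^ 2 = w y := Real.sq_sqrt (hw y).le
      rw [h1]
      ring
    have hVge : ∀ y, 1 ≤ deriv u y / (2 * w y * Real.sqrt (w y)) := by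
      intro y
      have h1 : Real.sqrt (w y) ^ 2 = w y := Real.sq_sqrt (hw y).le
      have h2 : (2 * w y * Real.sqrt (w y)) ^ 2 = 4 * (w y) ^ 2 * w y := by
        rw [mul_pow, mul_pow, h1]; ring
      have h3 : (deriv u y) ^ 2 = 4 * (w y) ^ 2 * (1 + w y) := by
        have := hEn y
        simp only [hwdef]
        linear_combination this
      have h4 : 0 < 2 * w y * Real.sqrt (w y) :=
        mul_pos (by simp only [hwdef]; linarith [hw y] : (0:ℝ) < 2 * w y) (hsqw y)
      rw [le_div_iff₀ h4]
      nlinarith [hdpos y, hw y, h2, h3, h4]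
    set H := fun y => (Real.sqrt (w y))⁻¹ - y with hH
    have hHd : ∀ y, HasDerivAt H (deriv u y / (2 * w y * Real.sqrt (w y)) - 1) y :=
      fun y => (hV y).sub (hasDerivAt_id y)
    have hmono : Monotone H :=
      monotone_of_deriv_nonneg (fun y => (hHd y).differentiableAt)
        (fun y => by rw [(hHd y).deriv]; linarith [hVge y])
    have hi0 : 0 < (Real.sqrt (w 0))⁻¹ := inv_pos.mpr (hsqw 0)
    have hle := hmono (show -(Real.sqrt (w 0))⁻¹ - 1 ≤ 0 by linarith)
    have hpos0 : 0 < (Real.sqrt (w (-(Real.sqrt (w 0))⁻¹ - 1)))⁻¹ := inv_pos.mpr (hsqw _)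
    simp only [hH] at hle
    nlinarith [hle, hpos0]
  · -- deriv u < 0 everywhere : u decreasing, stays ≤ u 0 < 0
    have hanti : StrictAnti u := strictAnti_of_deriv_neg hdneg
    have : (0:ℝ) ≤ u 0 := by
      apply le_of_tendsto hlim
      filter_upwards [eventually_ge_atTop (0:ℝ)] with y hy
      exact (hanti.antitone hy)
    linarith [hneg 0]

lemma u_le_one (hu : ContDiff ℝ 2 u)
    (hode : ∀ x, deriv (deriv u) x = 4 * u x - 6 * u x ^ 2)
    (hlim : Tendsto u atTop (nhds 0)) (hne : u ≠ 0) (x : ℝ) : u x ≤ 1 := by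
  have h1 := energy_zero hu hode hlim x
  have h2 := u_pos hu hode hlim hne x
  nlinarith [sq_nonneg (deriv u x), mul_pos h2 h2]

end Core5

lemma sech_sq_pos (x : ℝ) : 0 < sech x ^ 2 := by
  have := Real.cosh_pos x
  simp only [sech]
  positivity

lemma sech_sq_le_one (x : ℝ) : sech x ^ 2 ≤ 1 := by
  have h := Real.one_le_cosh x
  have hp := Real.cosh_pos x
  simp only [sech]
  rw [div_pow, one_pow, div_le_one (by positivity)]
  nlinarith

lemma core {u : ℝ → ℝ} (hu : ContDiff ℝ 2 u) (hne : u ≠ 0)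
    (hode : ∀ x, deriv (deriv u) x = 4 * u x - 6 * u x ^ 2)
    (hlim : Tendsto u atTop (nhds 0)) : ∃ y, ∀ x, u x = sech (x + y) ^ 2 := by
  have hpos := u_pos hu hode hlim hne
  have hle1 := u_le_one hu hode hlim hne
  have hEn := energy_zero hu hode hlim
  -- find a point X where u X < 1 and deriv u X < 0
  obtain ⟨X, hX⟩ := eventually_atTop.mp (hlim.eventually_lt_const (by norm_num : (0:ℝ) < 1))
  have hdnzX : ∀ x, X ≤ x → deriv u x ≠ 0 := by
    intro x hx h0
    have := hEn x
    rw [h0] at this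
    nlinarith [hpos x, hX x hx, mul_pos (hpos x) (hpos x)]
  have hdneg : ∀ x, X ≤ x → deriv u x < 0 := by
    rcases sign_Ici (cd2_cont_deriv hu) hdnzX with hp | hn
    · exfalso
      have hmono : StrictMonoOn u (Set.Ici X) :=
        strictMonoOn_of_deriv_pos (convex_Ici X) hu.continuous.continuousOn
          (fun x hx => hp x (le_of_lt (by simpa using hx)))
      have : u X ≤ 0 := by
        apply ge_of_tendsto hlim
        filter_upwards [eventually_gt_atTop X] with x hx
        exact (hmono (le_refl X) (le_of_lt hx) hx).le
      linarith [hpos X]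
    · exact hn
  set u₀ := u X with hu₀def
  have hu₀pos : 0 < u₀ := hpos X
  have hu₀lt1 : u₀ < 1 := hX X le_rfl
  have hd₀ : deriv u X < 0 := hdneg X le_rfl
  -- find s > 0 with sech s ^ 2 = u₀
  have hψ0 : sech (0:ℝ) ^ 2 = 1 := by simp [sech]
  obtain ⟨T, hT⟩ := eventually_atTop.mp
    ((tendsto_sechsq.eventually_lt_const hu₀pos).and (eventually_ge_atTop (0:ℝ)))
  obtain ⟨hTlt, hT0⟩ := hT T le_rfl
  have hIVT := intermediate_value_Icc' hT0 (contDiff_sechsq.continuous.continuousOn)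
  have hmem : u₀ ∈ Set.Icc (sech T ^ 2) (sech (0:ℝ) ^ 2) := by
    rw [hψ0]; exact ⟨hTlt.le, hu₀lt1.le⟩
  obtain ⟨s, hsmem, hψs0⟩ := hIVT hmem
  have hψs : sech s ^ 2 = u₀ := hψs0
  have hs0 : 0 < s := by
    rcases hsmem.1.eq_or_lt with h | h
    · exfalso; rw [← h, hψ0] at hψs; linarith
    · exact h
  have hsinh : 0 < Real.sinh s := Real.sinh_pos_iff.mpr hs0
  have hψ'neg : -2 * Real.sinh s / Real.cosh s ^ 3 < 0 := by
    have := Real.cosh_pos s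
    apply div_neg_of_neg_of_pos (by linarith) (by positivity)
  -- match derivatives
  have hd₀eq : deriv u X = -2 * Real.sinh s / Real.cosh s ^ 3 := by
    have h1 := sechsq_energy s
    rw [hψs] at h1
    have h2 := hEn X
    rw [← hu₀def] at h2
    have h3 : (deriv u X - (-2 * Real.sinh s / Real.cosh s ^ 3))
        * (deriv u X + (-2 * Real.sinh s / Real.cosh s ^ 3)) = 0 := by
      linear_combination h2 - h1
    rcases mul_eq_zero.mp h3 with h | h
    · linarith
    · exfalso; linarith
  -- ODE uniqueness
  set y := s - X with hy
  refine ⟨y, fun t => ?_⟩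
  have habs1 : ∀ t : ℝ, |u t| ≤ (1:ℝ) := by
    intro t; rw [abs_le]; exact ⟨by linarith [hpos t], hle1 t⟩
  have habs2 : ∀ t : ℝ, |sech t ^ 2| ≤ (1:ℝ) := by
    intro t; rw [abs_le]; exact ⟨by linarith [sech_sq_pos t], sech_sq_le_one t⟩
  have hf : ∀ t : ℝ, HasDerivAt (fun t => (u t, deriv u t))
      (VM 1 (u t, deriv u t)) t := by
    intro t
    have : VM 1 (u t, deriv u t) = (deriv u t, deriv (deriv u) t) := by
      simp only [VM, gM, cl_eq (habs1 t), hode t]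
    rw [this]
    exact (cd2_d1 hu t).prodMk (cd2_d2 hu t)
  have hg : ∀ t : ℝ, HasDerivAt
      (fun t => (sech (t + y) ^ 2, -2 * Real.sinh (t + y) / Real.cosh (t + y) ^ 3))
      (VM 1 (sech (t + y) ^ 2, -2 * Real.sinh (t + y) / Real.cosh (t + y) ^ 3)) t := by
    intro t
    have hshift : HasDerivAt (fun t : ℝ => t + y) 1 t := (hasDerivAt_id t).add_const y
    have h1 : HasDerivAt (fun t : ℝ => sech (t + y) ^ 2)
        (-2 * Real.sinh (t + y) / Real.cosh (t + y) ^ 3) t := by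
      have := (hasDerivAt_sechsq (t + y)).comp t hshift
      exact this.congr_deriv (by ring)
    have h2 : HasDerivAt (fun t : ℝ => -2 * Real.sinh (t + y) / Real.cosh (t + y) ^ 3)
        (4 * sech (t + y) ^ 2 - 6 * (sech (t + y) ^ 2) ^ 2) t := by
      have := (hasDerivAt_sechsq' (t + y)).comp t hshift
      exact this.congr_deriv (by ring)
    have : VM 1 (sech (t + y) ^ 2, -2 * Real.sinh (t + y) / Real.cosh (t + y) ^ 3)
        = (-2 * Real.sinh (t + y) / Real.cosh (t + y) ^ 3,
           4 * sech (t + y) ^ 2 - 6 * (sech (t + y) ^ 2) ^ 2) := by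
      simp only [VM, gM, cl_eq (habs2 (t + y))]
    rw [this]
    exact h1.prodMk h2
  have heqX : (fun t => (u t, deriv u t)) X
      = (fun t => (sech (t + y) ^ 2, -2 * Real.sinh (t + y) / Real.cosh (t + y) ^ 3)) X := by
    have hXy : X + y = s := by rw [hy]; ring
    simp only [hXy]
    rw [Prod.mk.injEq]
    exact ⟨(hψs.trans hu₀def).symm, hd₀eq⟩
  have := ode_unique (VM_lip (by norm_num : (0:ℝ) ≤ 1)) hf hg heqX t
  simpa using congrArg Prod.fst this

lemma forward_scaled {A k B : ℝ} (hA : 0 < A) (hk : 0 < k) {φ : ℝ → ℝ}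
    (hφC : ContDiff ℝ 2 φ) (hφne : φ ≠ 0)
    (hode : ∀ x, deriv (deriv φ) x = 4 * k ^ 2 * φ x + B * φ x ^ 2)
    (hlim : Tendsto φ atTop (nhds 0)) (hBA : B * A = 6 * k ^ 2) :
    ∃ y, ∀ x, φ x = -A * sech (k * x + y) ^ 2 := by
  set u : ℝ → ℝ := fun t => -A⁻¹ * φ (k⁻¹ * t) with hu
  have hlin : ContDiff ℝ 2 (fun t : ℝ => k⁻¹ * t) := contDiff_const.mul contDiff_id
  have huC : ContDiff ℝ 2 u := contDiff_const.mul (hφC.comp hlin)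
  have hui : ∀ x, φ x = -A * u (k * x) := by
    intro x
    simp only [hu]
    rw [show k⁻¹ * (k * x) = x by field_simp]
    field_simp
  have hun : u ≠ 0 := by
    intro h0
    apply hφne
    funext x
    rw [hui x, h0]
    simp
  have hulim : Tendsto u atTop (nhds 0) := by
    have h1 : Tendsto (fun t : ℝ => k⁻¹ * t) atTop atTop :=
      tendsto_id.const_mul_atTop (inv_pos.mpr hk)
    have h2 := (hlim.comp h1).const_mul (-A⁻¹)
    rw [mul_zero] at h2
    exact h2
  -- derivatives of u
  have hd1 : ∀ t : ℝ, HasDerivAt u (-A⁻¹ * k⁻¹ * deriv φ (k⁻¹ * t)) t := by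
    intro t
    have hin : HasDerivAt (fun t : ℝ => k⁻¹ * t) k⁻¹ t := by
      simpa using (hasDerivAt_id t).const_mul k⁻¹
    have := ((cd2_d1 hφC (k⁻¹ * t)).comp t hin).const_mul (-A⁻¹)
    refine this.congr_deriv (Eq.symm ?_)
    ring
  have hderiv_u : deriv u = fun t => -A⁻¹ * k⁻¹ * deriv φ (k⁻¹ * t) :=
    funext fun t => (hd1 t).deriv
  have hd2 : ∀ t : ℝ, HasDerivAt (deriv u)
      (-A⁻¹ * k⁻¹ * k⁻¹ * deriv (deriv φ) (k⁻¹ * t)) t := by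
    intro t
    rw [hderiv_u]
    have hin : HasDerivAt (fun t : ℝ => k⁻¹ * t) k⁻¹ t := by
      simpa using (hasDerivAt_id t).const_mul k⁻¹
    have := ((cd2_d2 hφC (k⁻¹ * t)).comp t hin).const_mul (-A⁻¹ * k⁻¹)
    refine this.congr_deriv (Eq.symm ?_)
    ring
  have huode : ∀ t, deriv (deriv u) t = 4 * u t - 6 * u t ^ 2 := by
    intro t
    rw [(hd2 t).deriv, hode (k⁻¹ * t)]
    have hφu : φ (k⁻¹ * t) = -A * u t := by
      simp only [hu]
      field_simp
    rw [hφu]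
    have hkne : k ≠ 0 := hk.ne'
    have hAne : A ≠ 0 := hA.ne'
    have hB : B = 6 * k ^ 2 / A := by
      field_simp
      linarith [hBA]
    rw [hB]
    field_simp
    ring
  obtain ⟨y, hy⟩ := core huC hun huode hulim
  refine ⟨y, fun x => ?_⟩
  rw [hui x, hy (k * x)]

lemma psi_contDiff (A k z : ℝ) : ContDiff ℝ 2 (fun x => -A * sech (k * x + z) ^ 2) :=
  contDiff_const.mul (contDiff_sechsq.comp
    ((contDiff_const.mul contDiff_id).add contDiff_const))

lemma psi_hlin (k z x : ℝ) : HasDerivAt (fun x : ℝ => k * x + z) k x := by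
  simpa using ((hasDerivAt_id x).const_mul k).add_const z

lemma psi_deriv2 (A k z : ℝ) (x : ℝ) :
    deriv (deriv (fun x => -A * sech (k * x + z) ^ 2)) x
      = -A * k ^ 2 * (4 * sech (k * x + z) ^ 2 - 6 * (sech (k * x + z) ^ 2) ^ 2) := by
  have d1 : ∀ t : ℝ, HasDerivAt (fun x => -A * sech (k * x + z) ^ 2)
      (-A * k * (-2 * Real.sinh (k * t + z) / Real.cosh (k * t + z) ^ 3)) t := by
    intro t
    have := ((hasDerivAt_sechsq (k * t + z)).comp t (psi_hlin k z t)).const_mul (-A)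
    refine this.congr_deriv (Eq.symm ?_)
    ring
  have hderiv : deriv (fun x => -A * sech (k * x + z) ^ 2)
      = fun t => -A * k * (-2 * Real.sinh (k * t + z) / Real.cosh (k * t + z) ^ 3) :=
    funext fun t => (d1 t).deriv
  rw [hderiv]
  have d2 : HasDerivAt (fun t => -A * k * (-2 * Real.sinh (k * t + z) / Real.cosh (k * t + z) ^ 3))
      (-A * k ^ 2 * (4 * sech (k * x + z) ^ 2 - 6 * (sech (k * x + z) ^ 2) ^ 2)) x := by
    have := ((hasDerivAt_sechsq' (k * x + z)).comp x (psi_hlin k z x)).const_mul (-A * k)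
    refine this.congr_deriv (Eq.symm ?_)
    ring
  exact d2.deriv

lemma psi_tendsto (A k z : ℝ) (hk : 0 < k) :
    Tendsto (fun x => -A * sech (k * x + z) ^ 2) atTop (nhds 0) := by
  have h1 : Tendsto (fun x : ℝ => k * x + z) atTop atTop :=
    tendsto_atTop_add_const_right _ z (tendsto_id.const_mul_atTop hk)
  have h2 := (tendsto_sechsq.comp h1).const_mul (-A)
  rw [mul_zero] at h2
  exact h2

lemma rpow_sq {x : ℝ} (hx : 0 ≤ x) (r : ℝ) : (x ^ r) ^ (2 : ℕ) = x ^ (r * 2) := by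
  rw [← Real.rpow_natCast (x ^ r) 2, ← Real.rpow_mul hx]
  norm_num

theorem stmt1 (ν₀ ω β : ℝ) (hν₀ : 0 < ν₀) (hβ : ν₀ ^ 2 / 3 < β)
    (c d νKdV : ℝ) (hc : c = β - ν₀ ^ 2 / 3) (hd : d = ω ^ 2 / 3 + 1)
    (hν : νKdV = -2 * (3 / 16 : ℝ) ^ ((2 : ℝ) / 3) * d ^ ((4 : ℝ) / 3) /
      (c ^ ((1 : ℝ) / 3) * (ω ^ 2 + 4) ^ ((1 : ℝ) / 3)))
    (φK : ℝ → ℝ)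
    (hφK : ∀ x, φK x = -Real.sqrt 3 * (3 / 16 : ℝ) ^ ((1 : ℝ) / 6) * d ^ ((1 : ℝ) / 3) /
      (c ^ ((1 : ℝ) / 3) * (ω ^ 2 + 4) ^ ((1 : ℝ) / 3)) *
      sech ((3 / 16 : ℝ) ^ ((1 : ℝ) / 3) * d ^ ((2 : ℝ) / 3) * x /
        (c ^ ((2 : ℝ) / 3) * (ω ^ 2 + 4) ^ ((1 : ℝ) / 6))) ^ 2) :
    ∀ φ : ℝ → ℝ,
      (ContDiff ℝ 2 φ ∧ φ ≠ 0 ∧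
        (∀ x : ℝ, -(β - ν₀ ^ 2 / 3) * deriv (deriv φ) x - 2 * νKdV * φ x +
          (3 / 2) * (ω ^ 2 / 3 + 1) * φ x ^ 2 = 0) ∧
        Tendsto φ atTop (nhds 0))
      ↔ ∃ y : ℝ, φ = fun x => φK (x + y) := by
  have hc' : 0 < c := by rw [hc]; linarith
  have hd' : 0 < d := by rw [hd]; positivity
  have hq : (0:ℝ) < ω ^ 2 + 4 := by positivity
  obtain ⟨k, hkdef⟩ : ∃ k : ℝ, k = (3 / 16 : ℝ) ^ ((1 : ℝ) / 3) * d ^ ((2 : ℝ) / 3) /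
    (c ^ ((2 : ℝ) / 3) * (ω ^ 2 + 4) ^ ((1 : ℝ) / 6)) := ⟨_, rfl⟩
  obtain ⟨A, hAdef⟩ : ∃ A : ℝ, A = Real.sqrt 3 * (3 / 16 : ℝ) ^ ((1 : ℝ) / 6) * d ^ ((1 : ℝ) / 3) /
    (c ^ ((1 : ℝ) / 3) * (ω ^ 2 + 4) ^ ((1 : ℝ) / 3)) := ⟨_, rfl⟩
  have hk : 0 < k := by rw [hkdef]; positivity
  have hA : 0 < A := by
    rw [hAdef]
    have h3 : (0:ℝ) < Real.sqrt 3 := Real.sqrt_pos.mpr (by norm_num)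
    positivity
  have hφKx : ∀ x, φK x = -A * sech (k * x) ^ 2 := by
    intro x
    have harg : (3 / 16 : ℝ) ^ ((1 : ℝ) / 3) * d ^ ((2 : ℝ) / 3) * x /
        (c ^ ((2 : ℝ) / 3) * (ω ^ 2 + 4) ^ ((1 : ℝ) / 6)) = k * x := by
      rw [hkdef]; ring
    rw [hφK x, harg, hAdef]
    ring
  -- rpow identities
  have hk2 : k ^ 2 = (3 / 16 : ℝ) ^ ((2 : ℝ) / 3) * d ^ ((4 : ℝ) / 3) /
      (c ^ ((4 : ℝ) / 3) * (ω ^ 2 + 4) ^ ((1 : ℝ) / 3)) := by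
    rw [hkdef, div_pow, mul_pow, mul_pow,
      rpow_sq (by norm_num : (0:ℝ) ≤ 3/16), rpow_sq hd'.le, rpow_sq hc'.le, rpow_sq hq.le]
    norm_num
  have e2 : c * c ^ ((1:ℝ)/3) = c ^ ((4:ℝ)/3) := by
    rw [show ((4:ℝ)/3) = 1 + 1/3 by norm_num, Real.rpow_add hc', Real.rpow_one]
  have e3 : d * d ^ ((1:ℝ)/3) = d ^ ((4:ℝ)/3) := by
    rw [show ((4:ℝ)/3) = 1 + 1/3 by norm_num, Real.rpow_add hd', Real.rpow_one]
  have e4 : Real.sqrt 3 * (3/16:ℝ) ^ ((1:ℝ)/6) = 4 * (3/16:ℝ) ^ ((2:ℝ)/3) := by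
    have hsq : Real.sqrt (3/16 : ℝ) = Real.sqrt 3 / 4 := by
      have h : ((Real.sqrt 3) / 4) ^ 2 = (3/16 : ℝ) := by
        rw [div_pow, Real.sq_sqrt (by norm_num : (0:ℝ) ≤ 3)]
        norm_num
      calc Real.sqrt (3/16 : ℝ) = Real.sqrt (((Real.sqrt 3) / 4) ^ 2) := by rw [h]
        _ = Real.sqrt 3 / 4 := Real.sqrt_sq (by positivity)
    have h12 : (3/16:ℝ) ^ ((1:ℝ)/2) = Real.sqrt 3 / 4 := by
      rw [← Real.sqrt_eq_rpow, hsq]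
    rw [show ((2:ℝ)/3) = 1/6 + 1/2 by norm_num,
      Real.rpow_add (by norm_num : (0:ℝ) < 3/16), h12]
    ring
  have hνk : νKdV = -2 * c * k ^ 2 := by
    rw [hν, hk2, ← e2]
    have h1 : c ^ ((1:ℝ)/3) ≠ 0 := (Real.rpow_pos_of_pos hc' _).ne'
    have h2 : (ω ^ 2 + 4) ^ ((1:ℝ)/3) ≠ 0 := (Real.rpow_pos_of_pos hq _).ne'
    field_simp
  have hBA' : 3 * d * A = 12 * c * k ^ 2 := by
    rw [hAdef, hk2, e4, ← e2, ← e3]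
    have h1 : c ^ ((1:ℝ)/3) ≠ 0 := (Real.rpow_pos_of_pos hc' _).ne'
    have h2 : (ω ^ 2 + 4) ^ ((1:ℝ)/3) ≠ 0 := (Real.rpow_pos_of_pos hq _).ne'
    field_simp
    ring
  have hBA : (3 * d / (2 * c)) * A = 6 * k ^ 2 := by
    field_simp
    linear_combination hBA'
  intro φ
  constructor
  · rintro ⟨hφC, hφne, hφode, hφlim⟩
    have hode' : ∀ x, deriv (deriv φ) x = 4 * k ^ 2 * φ x + (3 * d / (2 * c)) * φ x ^ 2 := by
      intro x
      have h := hφode x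
      rw [← hc, ← hd, hνk] at h
      have h2 : c * deriv (deriv φ) x = 4 * c * k ^ 2 * φ x + 3 / 2 * d * φ x ^ 2 := by
        nlinarith [h]
      apply mul_left_cancel₀ hc'.ne'
      rw [h2]
      field_simp
    obtain ⟨y0, hy0⟩ := forward_scaled hA hk hφC hφne hode' hφlim hBA
    refine ⟨y0 / k, ?_⟩
    funext x
    have harg : k * (x + y0 / k) = k * x + y0 := by field_simp
    rw [hy0 x, hφKx (x + y0 / k), harg]
  · rintro ⟨y, rfl⟩
    set z := k * y with hz
    have hφform : (fun x => φK (x + y)) = fun x => -A * sech (k * x + z) ^ 2 := by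
      funext x
      rw [hφKx (x + y), show k * (x + y) = k * x + z by rw [hz]; ring]
    rw [hφform]
    refine ⟨psi_contDiff A k z, ?_, ?_, psi_tendsto A k z hk⟩
    · intro h0
      have h1 := congrFun h0 (-z / k)
      have h2 : k * (-z / k) + z = 0 := by field_simp; ring
      rw [h2] at h1
      have h3 : sech (0:ℝ) = 1 := by simp [sech]
      rw [h3] at h1
      simp only [Pi.zero_apply, one_pow, mul_one] at h1
      linarith
    · intro x
      rw [psi_deriv2 A k z x, ← hc, ← hd, hνk]
      linear_combination (A * sech (k * x + z) ^ 2 ^ 2 / 2) * hBA'
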